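/- Let d ≥ 2, T > 0, and x_1, y_1 ∈ ℝ^d with x_1 ≠ y_1. Let b ∈ ℝ satisfy x_1^{(1)} + b > 0 and y_1^{(1)} + b > 0. Then there exists a unique w ∈ ℝ^d such that the solution of the Cauchy problem ẋ(t) = w · max(x^{(1)}(t) + b, 0), x(0) = x_1, satisfies x(T) = y_1. -/

import Mathlib

open Set

noncomputable section

/-- Auxiliary scalar flow: `sAux a k t` solves `s' = a·exp(k t)`, `s 0 = 0`. -/
def sAux (a k t : ℝ) : ℝ := if k = 0 then a * t else a * (Real.exp (k * t) - 1) / k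

lemma sAux_zero (a k : ℝ) : sAux a k 0 = 0 := by
  unfold sAux; split <;> simp

lemma sAux_hasDeriv (a k t : ℝ) : HasDerivAt (sAux a k) (a * Real.exp (k * t)) t := by
  unfold sAux
  rcases eq_or_ne k 0 with hk | hk
  · simpa [hk] using (hasDerivAt_id t).const_mul a
  · simp only [if_neg hk]
    have h1 : HasDerivAt (fun t => Real.exp (k * t)) (Real.exp (k * t) * k) t := by
      simpa [mul_comm, Function.comp_def] using (Real.hasDerivAt_exp (k * t)).comp t
        ((hasDerivAt_id t).const_mul k)
    have h2 : HasDerivAt (fun t => a * (Real.exp (k * t) - 1) / k)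
        (a * (Real.exp (k * t) * k) / k) t := ((h1.sub_const 1).const_mul a).div_const k
    convert h2 using 1
    field_simp

lemma sAux_key (a k t : ℝ) : a + sAux a k t * k = a * Real.exp (k * t) := by
  unfold sAux
  rcases eq_or_ne k 0 with hk | hk
  · simp [hk]
  · rw [if_neg hk]
    field_simp
    ring

lemma coord_abs_le_norm {d : ℕ} (x : EuclideanSpace ℝ (Fin d)) (i : Fin d) : |x i| ≤ ‖x‖ := by
  rw [EuclideanSpace.norm_eq, ← Real.sqrt_sq_eq_abs]
  apply Real.sqrt_le_sqrt
  have : |x i| ^ 2 ≤ ∑ j, ‖x j‖ ^ 2 := by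
    have := Finset.single_le_sum (f := fun j => ‖x j‖ ^ 2)
      (fun j _ => by positivity) (Finset.mem_univ i)
    simpa [Real.norm_eq_abs] using this
  simpa [sq_abs] using this

lemma lipAux {d : ℕ} (b : ℝ) (i : Fin d) (w : EuclideanSpace ℝ (Fin d)) :
    LipschitzWith ‖w‖₊ (fun x : EuclideanSpace ℝ (Fin d) => max (x i + b) 0 • w) := by
  apply LipschitzWith.of_dist_le_mul
  intro x y
  rw [dist_eq_norm, dist_eq_norm, ← sub_smul, norm_smul]
  have h1 : |max (x i + b) 0 - max (y i + b) 0| ≤ |x i - y i| := by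
    have := abs_max_sub_max_le_abs (x i + b) (y i + b) 0
    simpa using this
  have h2 : |x i - y i| ≤ ‖x - y‖ := by
    simpa using coord_abs_le_norm (x - y) i
  calc ‖max (x i + b) 0 - max (y i + b) 0‖ * ‖w‖
      ≤ ‖x - y‖ * ‖w‖ := by
        apply mul_le_mul_of_nonneg_right _ (norm_nonneg w)
        rw [Real.norm_eq_abs]
        exact h1.trans h2
    _ = ‖w‖₊ * ‖x - y‖ := by rw [mul_comm]; rfl

/-- For any `w`, the explicit curve `t ↦ x₁ + sAux a (w i) t • w` solves the ODE. -/
lemma explicit_sol {d : ℕ} (b : ℝ) (i : Fin d) (x₁ w : EuclideanSpace ℝ (Fin d))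
    (ha : 0 < x₁ i + b) :
    ∀ t : ℝ, HasDerivAt (fun t => x₁ + sAux (x₁ i + b) (w i) t • w)
      (max (((x₁ + sAux (x₁ i + b) (w i) t • w) i) + b) 0 • w) t := by
  intro t
  set a := x₁ i + b with ha_def
  set k := w i with hk_def
  have hcoord : (x₁ + sAux a k t • w) i + b = a * Real.exp (k * t) := by
    have : (x₁ + sAux a k t • w) i = x₁ i + sAux a k t * w i := by
      simp [PiLp.add_apply, PiLp.smul_apply, smul_eq_mul]
    rw [this, ← hk_def]
    have := sAux_key a k t
    linarith
  have hpos : 0 < a * Real.exp (k * t) := mul_pos ha (Real.exp_pos _)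
  have hmax : max (((x₁ + sAux a k t • w) i) + b) 0 = a * Real.exp (k * t) := by
    rw [hcoord, max_eq_left hpos.le]
  rw [hmax]
  exact ((sAux_hasDeriv a k t).smul_const w).const_add x₁

set_option maxHeartbeats 1000000 in
/-- Any solution of the ODE on `[0, T]` starting at `x₁` equals the explicit curve. -/
lemma eq_explicit {d : ℕ} (b : ℝ) (i : Fin d) (x₁ w : EuclideanSpace ℝ (Fin d))
    (ha : 0 < x₁ i + b) (T : ℝ) (hT : 0 < T) (γ : ℝ → EuclideanSpace ℝ (Fin d))
    (hγ0 : γ 0 = x₁)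
    (hγ' : ∀ t ∈ Set.Icc (0 : ℝ) T,
      HasDerivWithinAt γ (max (γ t i + b) 0 • w) (Set.Icc (0 : ℝ) T) t) :
    ∀ t ∈ Set.Icc (0 : ℝ) T, γ t = x₁ + sAux (x₁ i + b) (w i) t • w := by
  have hφ' := explicit_sol b i x₁ w ha
  have heq : EqOn γ (fun t => x₁ + sAux (x₁ i + b) (w i) t • w) (Icc 0 T) := by
    refine ODE_solution_unique (E := EuclideanSpace ℝ (Fin d))
      (v := fun _ x => max (x i + b) 0 • w) (K := ‖w‖₊)
      (fun _ => lipAux b i w) ?_ ?_ ?_ ?_ ?_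
    · exact fun t ht => (hγ' t ht).continuousWithinAt
    · exact fun t ht => (hγ' t (Ico_subset_Icc_self ht)).mono_of_mem_nhdsWithin
        (Icc_mem_nhdsGE_of_mem ht)
    · exact fun t _ => ((hφ' t).continuousAt).continuousWithinAt
    · exact fun t _ => (hφ' t).hasDerivWithinAt
    · simpa [sAux_zero] using hγ0
  exact fun t ht => heq ht

set_option maxHeartbeats 1000000 in
/-- One-neuron exact control of a single point: there is a unique velocity `w`
such that the solution of `ẋ = w·max(x⁽¹⁾ + b, 0)`, `x(0) = x₁`, reaches `y₁`
at time `T`. -/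
theorem statement7 (d : ℕ) (hd : 2 ≤ d) (T : ℝ) (hT : 0 < T)
    (x₁ y₁ : EuclideanSpace ℝ (Fin d)) (hxy : x₁ ≠ y₁) (b : ℝ)
    (hx : x₁ ⟨0, by omega⟩ + b > 0) (hy : y₁ ⟨0, by omega⟩ + b > 0) :
    ∃! w : EuclideanSpace ℝ (Fin d),
      ∃ γ : ℝ → EuclideanSpace ℝ (Fin d),
        γ 0 = x₁ ∧ γ T = y₁ ∧
        ∀ t ∈ Set.Icc (0 : ℝ) T,
          HasDerivWithinAt γ (max (γ t ⟨0, by omega⟩ + b) 0 • w)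
            (Set.Icc (0 : ℝ) T) t := by
  set i : Fin d := ⟨0, by omega⟩ with hi
  set a := x₁ i + b with ha_def
  set c := y₁ i + b with hc_def
  have ha : 0 < a := hx
  have hc : 0 < c := hy
  -- the unique `k = w i`, determined by `a · exp(k T) = c`
  set k : ℝ := Real.log (c / a) / T with hk_def
  have hexp : a * Real.exp (k * T) = c := by
    rw [hk_def, div_mul_cancel₀ _ hT.ne', Real.exp_log (div_pos hc ha)]
    field_simp
  -- the scale: S = sAux a k T, positive
  set S := sAux a k T with hS_def
  have hSkey : a + S * k = c := by rw [hS_def, sAux_key]; exact hexp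
  have hSpos : 0 < S := by
    rw [hS_def]
    unfold sAux
    rcases eq_or_ne k 0 with hk0 | hk0
    · simp only [if_pos hk0]; exact mul_pos ha hT
    · simp only [if_neg hk0]
      rcases lt_or_gt_of_ne hk0 with hneg | hpos
      · have : Real.exp (k * T) < 1 := by
          rw [← Real.exp_zero]
          exact Real.exp_lt_exp.mpr (mul_neg_of_neg_of_pos hneg hT)
        have h1 : a * (Real.exp (k * T) - 1) < 0 := mul_neg_of_pos_of_neg ha (by linarith)
        exact div_pos_of_neg_of_neg h1 hneg
      · have : 1 < Real.exp (k * T) := by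
          rw [← Real.exp_zero]
          exact Real.exp_lt_exp.mpr (mul_pos hpos hT)
        exact div_pos (mul_pos ha (by linarith)) hpos
  -- candidate w
  set w : EuclideanSpace ℝ (Fin d) := S⁻¹ • (y₁ - x₁) with hw_def
  have hwi : w i = k := by
    have hyx : y₁ i - x₁ i = c - a := by rw [hc_def, ha_def]; ring
    have : w i = S⁻¹ * (y₁ i - x₁ i) := by
      simp [hw_def, PiLp.smul_apply, PiLp.sub_apply, smul_eq_mul]
    rw [this, hyx]
    have : c - a = S * k := by linarith
    rw [this, inv_mul_cancel_left₀ hSpos.ne']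
  have hSw : S • w = y₁ - x₁ := by
    rw [hw_def, smul_smul, mul_inv_cancel₀ hSpos.ne', one_smul]
  refine ⟨w, ?_, ?_⟩
  · -- existence
    refine ⟨fun t => x₁ + sAux a k t • w, by simp [sAux_zero], ?_, ?_⟩
    · show x₁ + sAux a k T • w = y₁
      rw [← hS_def, hSw]; abel
    · intro t _
      have := explicit_sol b i x₁ w ha
      rw [← ha_def] at this
      rw [hwi] at this
      exact (this t).hasDerivWithinAt
  · -- uniqueness
    rintro w' ⟨γ, hγ0, hγT, hγ'⟩
    set k' := w' i with hk'_def
    have hφT : x₁ + sAux a k' T • w' = y₁ := by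
      have := eq_explicit b i x₁ w' ha T hT γ hγ0 hγ' T (right_mem_Icc.mpr hT.le)
      rw [hγT] at this
      rw [← ha_def, ← hk'_def] at this
      exact this.symm
    -- first coordinate forces k' = k
    have hcoordT : a + sAux a k' T * k' = c := by
      have h1 : (x₁ + sAux a k' T • w') i = y₁ i := by rw [hφT]
      have h2 : (x₁ + sAux a k' T • w') i = x₁ i + sAux a k' T * w' i := by
        simp [PiLp.add_apply, PiLp.smul_apply, smul_eq_mul]
      rw [h2] at h1
      rw [hc_def, ← h1, ha_def, ← hk'_def]
      ring
    have hkk : k' = k := by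
      have h1 : a * Real.exp (k' * T) = c := by rw [← sAux_key a k' T]; exact hcoordT
      have h2 : Real.exp (k' * T) = Real.exp (k * T) := by
        exact mul_left_cancel₀ ha.ne' (h1.trans hexp.symm)
      have := Real.exp_injective h2
      exact mul_right_cancel₀ hT.ne' this
    -- hence the scale agrees, and w' = w
    have hST : sAux a k' T = S := by rw [hkk, hS_def]
    rw [hST] at hφT
    have : S • w' = y₁ - x₁ := by
      have := hφT
      rw [add_comm] at this
      exact eq_sub_of_add_eq this
    rw [← hSw] at this
    exact smul_right_injective _ hSpos.ne' this
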